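/- Assume in addition that G is compact, injective, and positive definite in the sense that b φ φ = ⟨G φ, φ⟩ > 0 for every φ ≠ 0. Let ψ⁰ ∈ H with b ψ⁰ ψ⁰ = 1. Then there exists τ_max > 0 such that for every choice of step sizes (τⁿ) with 0 < τⁿ ≤ τ_max for all n, the gradient flow iteration ψ̂ⁿ⁺¹ := (1 − τⁿ) • ψⁿ + (τⁿ·γⁿ) • (G ψⁿ), with γⁿ := 1/(b (G ψⁿ) ψⁿ), is well defined (ψ̂ⁿ⁺¹ ≠ 0), and with ψⁿ⁺¹ := (√(b ψ̂ⁿ⁺¹ ψ̂ⁿ⁺¹))⁻¹ • ψ̂ⁿ⁺¹ the energy is dissipative: 𝖤(ψⁿ⁺¹) ≤ 𝖤(ψⁿ) for all n ≥ 0, where 𝖤(u) := ½⟨u, u⟩. -/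

import Mathlib

open RealInnerProductSpace

private lemma gf_step {H : Type*} [NormedAddCommGroup H] [InnerProductSpace ℝ H]
    (b : H →L[ℝ] H →L[ℝ] ℝ) (hb : ∀ x y : H, b x y = b y x)
    (G : H →L[ℝ] H) (hG : ∀ ψ φ : H, ⟪G ψ, φ⟫ = b ψ φ)
    (hpos : ∀ φ : H, φ ≠ 0 → 0 < b φ φ)
    (ψ : H) (hψ : b ψ ψ = 1) (τ : ℝ) (hτ0 : 0 < τ) (hτ1 : τ ≤ 1)
    (ψh : H) (hdef : ψh = (1 - τ) • ψ + (τ * (1 / b (G ψ) ψ)) • G ψ) :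
    ψh ≠ 0 ∧ 1 ≤ b ψh ψh ∧ ⟪ψh, ψh⟫ ≤ ⟪ψ, ψ⟫ := by
  have hGψψ : ⟪G ψ, ψ⟫ = 1 := (hG ψ ψ).trans hψ
  have hGne : G ψ ≠ 0 := by
    intro h; rw [h, inner_zero_left] at hGψψ; norm_num at hGψψ
  set d := b (G ψ) ψ with hd
  have hdinner : d = ⟪G ψ, G ψ⟫ := by rw [hd, hb, ← hG]
  have hd0 : 0 < d := by
    rw [hdinner]
    exact lt_of_le_of_ne real_inner_self_nonneg (Ne.symm (inner_self_ne_zero.2 hGne))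
  set γ := 1 / d with hγ
  have hγd : γ * d = 1 := one_div_mul_cancel hd0.ne'
  have hγ0 : 0 < γ := by positivity
  have hbψhψ : b ψh ψ = 1 := by
    rw [hdef]
    simp only [map_add, map_smul, ContinuousLinearMap.add_apply,
      ContinuousLinearMap.smul_apply, smul_eq_mul, hψ, ← hd, ← hγ]
    nlinarith [hγd]
  have hψhne : ψh ≠ 0 := by
    intro h; rw [h] at hbψhψ; simp at hbψhψ
  have hbnn : ∀ x : H, 0 ≤ b x x := by
    intro x
    rcases eq_or_ne x 0 with rfl | h
    · simp
    · exact (hpos x h).le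
  refine ⟨hψhne, ?_, ?_⟩
  · have h0 := hbnn (ψh - ψ)
    have hexp : b (ψh - ψ) (ψh - ψ) = b ψh ψh - 2 * b ψh ψ + b ψ ψ := by
      simp only [map_sub, ContinuousLinearMap.sub_apply]
      rw [hb ψ ψh]; ring
    rw [hexp, hbψhψ, hψ] at h0; linarith
  · set a := ⟪ψ, ψ⟫ with ha
    have hCS := real_inner_mul_inner_self_le (G ψ) ψ
    rw [hGψψ, ← hdinner, ← ha] at hCS
    have hγa : γ ≤ a := by
      rw [hγ, div_le_iff₀ hd0]; nlinarith
    have hinner : ⟪ψh, ψh⟫ = (1 - τ)^2 * a + 2 * ((1 - τ) * (τ * γ)) + (τ * γ)^2 * d := by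
      rw [hdef]
      simp only [inner_add_add_self, real_inner_smul_left, real_inner_smul_right]
      have hGψψ' : ⟪ψ, G ψ⟫ = 1 := by rw [real_inner_comm]; exact hGψψ
      simp only [hGψψ, hGψψ', ← hdinner, ← ha]
      ring
    have hkey : (τ * γ)^2 * d = τ^2 * γ := by
      have : γ * γ * d = γ := by rw [mul_assoc, hγd, mul_one]
      nlinarith [this]
    rw [hinner, hkey]
    nlinarith [mul_nonneg (mul_nonneg hτ0.le (by linarith : (0:ℝ) ≤ 2 - τ))
      (sub_nonneg.2 hγa)]

/-- Energy dissipation of the (normalized) gradient flow iteration: there is a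
maximal step size `τ_max > 0` such that for all step sizes `0 < τⁿ ≤ τ_max` the
iteration `ψ̂ⁿ⁺¹ = (1-τⁿ)•ψⁿ + (τⁿγⁿ)•Gψⁿ`, `ψⁿ⁺¹ = ψ̂ⁿ⁺¹/√(b ψ̂ⁿ⁺¹ ψ̂ⁿ⁺¹)` is
well defined and the energy `𝖤(u) = ½⟪u,u⟫` is nonincreasing. -/
theorem gradient_flow_energy_dissipation
    {H : Type*} [NormedAddCommGroup H] [InnerProductSpace ℝ H] [CompleteSpace H]
    (b : H →L[ℝ] H →L[ℝ] ℝ) (hb : ∀ x y : H, b x y = b y x)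
    (G : H →L[ℝ] H) (hG : ∀ ψ φ : H, ⟪G ψ, φ⟫ = b ψ φ)
    (hcpt : IsCompactOperator (⇑G)) (hinj : Function.Injective (⇑G))
    (hpos : ∀ φ : H, φ ≠ 0 → 0 < b φ φ)
    (ψ0 : H) (hψ0 : b ψ0 ψ0 = 1) :
    ∃ τmax > (0 : ℝ), ∀ τ : ℕ → ℝ, (∀ n, 0 < τ n ∧ τ n ≤ τmax) →
      ∀ ψ ψhat : ℕ → H, ψ 0 = ψ0 →
      (∀ n : ℕ, ψhat (n + 1)
          = (1 - τ n) • ψ n + (τ n * (1 / b (G (ψ n)) (ψ n))) • G (ψ n)) →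
      (∀ n : ℕ, ψ (n + 1)
          = (Real.sqrt (b (ψhat (n + 1)) (ψhat (n + 1))))⁻¹ • ψhat (n + 1)) →
      ∀ n : ℕ, ψhat (n + 1) ≠ 0 ∧
        (1 / 2 : ℝ) * ⟪ψ (n + 1), ψ (n + 1)⟫ ≤ (1 / 2 : ℝ) * ⟪ψ n, ψ n⟫ := by
  refine ⟨1, one_pos, ?_⟩
  intro τ hτ ψ ψhat h0 hhat hnorm
  have inv : ∀ n, b (ψ n) (ψ n) = 1 := by
    intro n
    induction n with
    | zero => rw [h0]; exact hψ0
    | succ n ih =>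
      obtain ⟨hne, h1, _⟩ := gf_step b hb G hG hpos (ψ n) ih (τ n) (hτ n).1 (hτ n).2
        (ψhat (n + 1)) (hhat n)
      rw [hnorm n]
      set B := b (ψhat (n + 1)) (ψhat (n + 1)) with hB
      have hB0 : 0 < B := lt_of_lt_of_le one_pos h1
      have hs : Real.sqrt B * Real.sqrt B = B := Real.mul_self_sqrt hB0.le
      have hsne : Real.sqrt B ≠ 0 := by positivity
      simp only [map_smul, ContinuousLinearMap.smul_apply, smul_eq_mul, ← hB]
      field_simp
      rw [sq, hs]
  intro n
  obtain ⟨hne, h1, h2⟩ := gf_step b hb G hG hpos (ψ n) (inv n) (τ n) (hτ n).1 (hτ n).2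
    (ψhat (n + 1)) (hhat n)
  refine ⟨hne, ?_⟩
  set B := b (ψhat (n + 1)) (ψhat (n + 1)) with hB
  have hB0 : 0 < B := lt_of_lt_of_le one_pos h1
  have hs : Real.sqrt B * Real.sqrt B = B := Real.mul_self_sqrt hB0.le
  have hs1 : 1 ≤ Real.sqrt B := by
    rw [show (1:ℝ) = Real.sqrt 1 by simp]; exact Real.sqrt_le_sqrt h1
  have hIn : 0 ≤ ⟪ψhat (n + 1), ψhat (n + 1)⟫ := real_inner_self_nonneg
  have hexp : ⟪ψ (n + 1), ψ (n + 1)⟫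
      = (Real.sqrt B)⁻¹ * ((Real.sqrt B)⁻¹ * ⟪ψhat (n + 1), ψhat (n + 1)⟫) := by
    rw [hnorm n, real_inner_smul_left, real_inner_smul_right, ← hB]
  have hle1 : (Real.sqrt B)⁻¹ ≤ 1 := by
    rw [inv_le_one_iff₀]; right; exact hs1
  have hnn : 0 ≤ (Real.sqrt B)⁻¹ := by positivity
  have : ⟪ψ (n + 1), ψ (n + 1)⟫ ≤ ⟪ψhat (n + 1), ψhat (n + 1)⟫ := by
    rw [hexp]
    calc (Real.sqrt B)⁻¹ * ((Real.sqrt B)⁻¹ * ⟪ψhat (n + 1), ψhat (n + 1)⟫)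
        ≤ 1 * (1 * ⟪ψhat (n + 1), ψhat (n + 1)⟫) := by
          apply mul_le_mul hle1 _ (by positivity) one_pos.le
          exact mul_le_mul hle1 le_rfl hIn one_pos.le
      _ = ⟪ψhat (n + 1), ψhat (n + 1)⟫ := by ring
  linarith
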